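/- In a pre-Hilbert left 𝕆-module H, for all u, v ∈ H and p ∈ 𝕆 one has ⟨u, p·v⟩ = ⟨u, v⟩·conj(p) + [p,u,v], where [p,u,v] := ⟨p·u, v⟩ − p·⟨u, v⟩. -/

import Mathlib

noncomputable section

/-- The octonions, realized as the Cayley–Dickson double of the quaternions. -/
abbrev 𝕆 : Type := Quaternion ℝ × Quaternion ℝ

/-- Octonion multiplication via the Cayley–Dickson formula
`(a,b)(c,d) = (ac - d̄b, da + bc̄)`. -/
def omul (x y : 𝕆) : 𝕆 :=
  (x.1 * y.1 - star y.2 * x.2, y.2 * x.1 + x.2 * star y.1)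

/-- Octonionic conjugation. -/
def oconj (x : 𝕆) : 𝕆 := (star x.1, -x.2)

/-- The octonion `1`. -/
def oone : 𝕆 := (1, 0)

/-- Real part of an octonion. -/
def ore (x : 𝕆) : ℝ := x.1.re

/-- Embedding of the reals into the octonions. -/
def oreal (r : ℝ) : 𝕆 := ((r : Quaternion ℝ), 0)

/-- Squared norm of an octonion. -/
def onormSq (x : 𝕆) : ℝ := ore (omul x (oconj x))

/-- A pre-Hilbert left `𝕆`-module: a real vector space `H` with an `ℝ`-linear
left `𝕆`-scalar multiplication `sm` satisfying `1·x = x` and the alternating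
left-associator law, together with an `ℝ`-bilinear `𝕆`-valued inner product `inn`
which is `𝕆`-para-linear, hermitian and positive definite. -/
structure PreHilbO (H : Type*) [AddCommGroup H] [Module ℝ H] where
  sm : 𝕆 →ₗ[ℝ] H →ₗ[ℝ] H
  inn : H →ₗ[ℝ] H →ₗ[ℝ] 𝕆
  one_sm : ∀ x : H, sm oone x = x
  alt : ∀ (p q : 𝕆) (x : H),
    sm (omul p q) x - sm p (sm q x) = -(sm (omul q p) x - sm q (sm p x))
  para : ∀ (p : 𝕆) (u v : H), ore (inn (sm p u) v - omul p (inn u v)) = 0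
  herm : ∀ u v : H, inn u v = oconj (inn v u)
  pos : ∀ u : H, ∃ r : ℝ, 0 ≤ r ∧ inn u u = oreal r
  posdef : ∀ u : H, inn u u = 0 → u = 0

/-! Basic octonion lemmas -/

lemma ore_mul_comm (x y : 𝕆) : ore (omul x y) = ore (omul y x) := by
  simp [omul, ore, Quaternion.re_mul]; ring

lemma oconj_omul (x y : 𝕆) : oconj (omul x y) = omul (oconj y) (oconj x) := by
  simp [omul, oconj, Prod.ext_iff, Quaternion.ext_iff, Quaternion.re_mul,
    Quaternion.imI_mul, Quaternion.imJ_mul, Quaternion.imK_mul]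

lemma oconj_eq (x : 𝕆) : oconj x = oreal (2 * ore x) - x := by
  simp [oconj, oreal, ore, Prod.ext_iff, Quaternion.ext_iff]; ring

lemma oconj_sub (x y : 𝕆) : oconj (x - y) = oconj x - oconj y := by
  simp [oconj, Prod.ext_iff, star_sub]; abel

lemma omul_add_left (x y z : 𝕆) : omul (x + y) z = omul x z + omul y z := by
  simp [omul, Prod.ext_iff, add_mul, mul_add]; constructor <;> abel

lemma omul_add_right (x y z : 𝕆) : omul x (y + z) = omul x y + omul x z := by
  simp [omul, Prod.ext_iff, add_mul, mul_add]; constructor <;> abel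

lemma omul_neg_right (x y : 𝕆) : omul x (-y) = - omul x y := by
  simp [omul, Prod.ext_iff, mul_neg, neg_mul, neg_add, sub_neg_eq_add, neg_sub]
  constructor <;> abel

lemma omul_sub_right (x y z : 𝕆) : omul x (y - z) = omul x y - omul x z := by
  rw [sub_eq_add_neg, omul_add_right, omul_neg_right, sub_eq_add_neg]

lemma omul_smul_right (r : ℝ) (x y : 𝕆) : omul x (r • y) = r • omul x y := by
  simp [omul, Prod.ext_iff, smul_sub, smul_add, mul_smul_comm, smul_mul_assoc]

lemma omul_oone (x : 𝕆) : omul x oone = x := by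
  simp [omul, oone]

lemma oreal_def (r : ℝ) : oreal r = r • oone := by
  refine Prod.ext ?_ ?_ <;>
    simp [oreal, oone, Quaternion.ext_iff, Quaternion.re_smul, Quaternion.imI_smul,
      Quaternion.imJ_smul, Quaternion.imK_smul, Quaternion.re_one, Quaternion.imI_one,
      Quaternion.imJ_one, Quaternion.imK_one]

lemma omul_oreal (x : 𝕆) (r : ℝ) : omul x (oreal r) = r • x := by
  rw [oreal_def, omul_smul_right, omul_oone]

lemma ore_sub (x y : 𝕆) : ore (x - y) = ore x - ore y := by simp [ore]
lemma ore_neg (x : 𝕆) : ore (-x) = - ore x := by simp [ore]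
lemma ore_smul (r : ℝ) (x : 𝕆) : ore (r • x) = r * ore x := by simp [ore]
lemma ore_oconj (x : 𝕆) : ore (oconj x) = ore x := by simp [ore, oconj]

lemma omul_nondeg (a : 𝕆) (H : ∀ q : 𝕆, ore (omul q a) = 0) : a = 0 := by
  have hh := H (oconj a)
  simp [omul, oconj, ore, Quaternion.re_mul] at hh
  have n1 := mul_self_nonneg a.1.re
  have n2 := mul_self_nonneg a.1.imI
  have n3 := mul_self_nonneg a.1.imJ
  have n4 := mul_self_nonneg a.1.imK
  have n5 := mul_self_nonneg a.2.re
  have n6 := mul_self_nonneg a.2.imI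
  have n7 := mul_self_nonneg a.2.imJ
  have n8 := mul_self_nonneg a.2.imK
  have e1 : a.1.re = 0 := mul_self_eq_zero.mp (le_antisymm (by linarith) n1)
  have e2 : a.1.imI = 0 := mul_self_eq_zero.mp (le_antisymm (by linarith) n2)
  have e3 : a.1.imJ = 0 := mul_self_eq_zero.mp (le_antisymm (by linarith) n3)
  have e4 : a.1.imK = 0 := mul_self_eq_zero.mp (le_antisymm (by linarith) n4)
  have e5 : a.2.re = 0 := mul_self_eq_zero.mp (le_antisymm (by linarith) n5)
  have e6 : a.2.imI = 0 := mul_self_eq_zero.mp (le_antisymm (by linarith) n6)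
  have e7 : a.2.imJ = 0 := mul_self_eq_zero.mp (le_antisymm (by linarith) n7)
  have e8 : a.2.imK = 0 := mul_self_eq_zero.mp (le_antisymm (by linarith) n8)
  refine Prod.ext ?_ ?_ <;> ext <;> simp [e1,e2,e3,e4,e5,e6,e7,e8, Quaternion.re_zero, Quaternion.imI_zero,
    Quaternion.imJ_zero, Quaternion.imK_zero]

/-! Module lemmas -/

section Mod
variable {H : Type*} [AddCommGroup H] [Module ℝ H] (h : PreHilbO H)

lemma para' (q : 𝕆) (x y : H) :
    ore (omul q (h.inn x y)) = ore (h.inn (h.sm q x) y) := by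
  have := h.para q x y
  rw [ore_sub, sub_eq_zero] at this
  exact this.symm

/-- `⟨pw, w⟩ = p ⟨w, w⟩`. -/
lemma diag (p : 𝕆) (w : H) : h.inn (h.sm p w) w = omul p (h.inn w w) := by
  obtain ⟨r, -, hr⟩ := h.pos w
  -- the associator-type quantity
  set A : 𝕆 → 𝕆 := fun t => h.inn (h.sm t w) w - omul t (h.inn w w) with hA
  -- B q p = ore ⟨D(q,p)w, w⟩
  set B : 𝕆 → 𝕆 → ℝ :=
    fun q t => ore (h.inn (h.sm (omul q t) w - h.sm q (h.sm t w)) w) with hB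
  have hBanti : ∀ q t, B q t = - B t q := by
    intro q t
    have halt := h.alt q t w
    rw [hB]
    simp only [halt, map_neg, LinearMap.neg_apply, ore_neg]
  -- ore(omul q (A t)) = - B q t
  have hmain : ∀ q t, ore (omul q (A t)) = - B q t := by
    intro q t
    have e1 : ore (omul q (h.inn (h.sm t w) w)) = ore (h.inn (h.sm q (h.sm t w)) w) :=
      para' h q (h.sm t w) w
    have e2 : ore (omul q (omul t (h.inn w w))) = ore (h.inn (h.sm (omul q t) w) w) := by
      rw [← para' h (omul q t) w w, hr, omul_oreal, omul_oreal, omul_smul_right]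
    rw [hA]
    simp only
    rw [omul_sub_right, ore_sub, e1, e2, hB]
    simp only [map_sub, LinearMap.sub_apply, ore_sub]
    ring
  -- symmetry: ore(omul q (A t)) = ore(omul t (A q))
  have hsymm : ∀ q t, ore (omul q (A t)) = ore (omul t (A q)) := by
    have hT : ∀ q t, ore (omul q (h.inn (h.sm t w) w))
        = 2 * (r * ore t) * ore q - ore (h.inn (h.sm q w) (h.sm t w)) := by
      intro q t
      have hz : ore (h.inn w (h.sm t w)) = r * ore t := by
        rw [h.herm w (h.sm t w), ore_oconj, ← para' h t w w, hr, omul_oreal, ore_smul]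
      rw [h.herm (h.sm t w) w, oconj_eq, omul_sub_right, ore_sub, omul_oreal, ore_smul,
        para' h q w (h.sm t w), hz]
      try ring
    intro q t
    have hC : ore (h.inn (h.sm q w) (h.sm t w)) = ore (h.inn (h.sm t w) (h.sm q w)) := by
      rw [h.herm (h.sm q w) (h.sm t w), ore_oconj]
    have hY : ∀ a b : 𝕆, ore (omul a (omul b (h.inn w w))) = r * ore (omul a b) := by
      intro a b
      rw [hr, omul_oreal, omul_smul_right, ore_smul]
    rw [hA]
    simp only
    rw [omul_sub_right, ore_sub, omul_sub_right, ore_sub, hT q t, hT t q, hY, hY, hC,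
      ore_mul_comm q t]
    ring
  -- conclude B = 0 hence A p = 0
  have hzero : ∀ q, ore (omul q (A p)) = 0 := by
    intro q
    have h1 := hmain q p
    have h2 := hmain p q
    have h3 := hsymm q p
    have h4 := hBanti q p
    linarith
  have := omul_nondeg (A p) hzero
  rw [hA] at this
  simpa [sub_eq_zero] using this

/-- alternating property of the associator `[p,u,v]`. -/
lemma altern (p : 𝕆) (u v : H) :
    h.inn (h.sm p v) u - omul p (h.inn v u)
      = -(h.inn (h.sm p u) v - omul p (h.inn u v)) := by
  have hsum := diag h p (u + v)
  have huu := diag h p u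
  have hvv := diag h p v
  simp only [map_add, LinearMap.add_apply, omul_add_right] at hsum
  rw [huu, hvv] at hsum
  linear_combination (norm := abel_nf) hsum

end Mod

/-- In a pre-Hilbert left octonionic module:
inn u (p*v) = (inn u v)*conj(p) + [p,u,v]. -/
theorem stmt_4 {H : Type*} [AddCommGroup H] [Module ℝ H] (h : PreHilbO H)
    (p : 𝕆) (u v : H) :
    h.inn u (h.sm p v)
      = omul (h.inn u v) (oconj p) + (h.inn (h.sm p u) v - omul p (h.inn u v)) := by
  have h1 : h.inn u (h.sm p v) = oconj (h.inn (h.sm p v) u) := h.herm u (h.sm p v)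
  have h2 : h.inn (h.sm p v) u
      = omul p (h.inn v u) - (h.inn (h.sm p u) v - omul p (h.inn u v)) := by
    have := altern h p u v
    linear_combination (norm := abel_nf) this
  have hRe : ore (h.inn (h.sm p u) v - omul p (h.inn u v)) = 0 := h.para p u v
  rw [h1, h2, oconj_sub]
  rw [oconj_omul, ← h.herm u v]
  have h3 : oconj (h.inn (h.sm p u) v - omul p (h.inn u v))
      = -(h.inn (h.sm p u) v - omul p (h.inn u v)) := by
    rw [oconj_eq, hRe]
    simp [oreal]
    show (0 : 𝕆) - _ = _
    rw [zero_sub, neg_sub]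
  rw [h3]
  abel
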